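/- Every deterministic k-way branching program solving the Boolean binary tree evaluation problem BT_2^3(k) has at least k^3 / log k states, for all sufficiently large k. -/

import Mathlib

/-! ## Tree evaluation problems -/

/-- The `k`-valued input variables of the tree evaluation problem on the complete
`d`-ary tree with `h` levels: the single variable of a height-1 tree is its leaf
value; for a tree of height `h+2`, a variable is either an entry `f_root(args)`
of the root function's table, or a variable of one of the `d` principal subtrees. -/
inductive TEVar (d k : ℕ) : ℕ → Type where
  | leaf : TEVar d k 1
  | root {h : ℕ} (args : Fin d → Fin k) : TEVar d k (h + 2)
  | child {h : ℕ} (j : Fin d) (x : TEVar d k (h + 1)) : TEVar d k (h + 2)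

/-- The value of the root of the tree, computed bottom-up from an assignment of
values to all input variables. (For the degenerate height 0 it returns a junk value.) -/
def rootValue (d k : ℕ) (hk : 0 < k) : (h : ℕ) → (TEVar d k h → Fin k) → Fin k
  | 0, _ => ⟨0, hk⟩
  | 1, I => I .leaf
  | (h + 2), I => I (.root fun j => rootValue d k hk (h + 1) fun x => I (.child j x))

/-- The Boolean tree evaluation problem `BT_d^h(k)`: does the root have value 1
(represented by `(0 : Fin k)`)? -/
def BTfun (d k : ℕ) (hk : 0 < k) (h : ℕ) (I : TEVar d k h → Fin k) : Bool :=
  decide (rootValue d k hk h I = ⟨0, hk⟩)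

/-- `ThriftyVar d k hk h I v` holds iff querying variable `v` on input `I` is a
thrifty query: if `v` is an entry `f_i(args)` of the function table of an internal
node `i`, then `args` must be the tuple of correct values of the children of `i`. -/
def ThriftyVar (d k : ℕ) (hk : 0 < k) : (h : ℕ) → (TEVar d k h → Fin k) → TEVar d k h → Prop
  | 0, _, _ => True
  | 1, _, _ => True
  | (h + 2), I, .root args =>
      args = fun j => rootValue d k hk (h + 1) fun x => I (.child j x)
  | (h + 2), I, .child j x =>
      ThriftyVar d k hk (h + 1) (fun y => I (.child j y)) x

/-! ## k-way branching programs -/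

/-- A deterministic `k`-way branching program with input variables `V` (each taking
values in `[k] = Fin k`) and outputs in `R`. Each state is either a non-final state
labelled with the variable it queries (`Sum.inl v`), with `k` outedges given by
`next`, or a final state labelled with an output (`Sum.inr r`). -/
structure DBP (V : Type) (k : ℕ) (R : Type) where
  Q : Type
  fin : Fintype Q
  start : Q
  label : Q → V ⊕ R
  next : Q → Fin k → Q

namespace DBP

variable {V : Type} {k : ℕ} {R : Type}

/-- The size of a branching program is its number of states. -/
def size (B : DBP V k R) : ℕ := @Fintype.card B.Q B.fin

/-- One deterministic step on input `I` (final states are absorbing). -/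
def step (B : DBP V k R) (I : V → Fin k) (q : B.Q) : B.Q :=
  match B.label q with
  | .inl v => B.next q (I v)
  | .inr _ => q

/-- `B` computes the total function `f`: on every input, the computation reaches the
final state labelled with the correct output. -/
def Computes (B : DBP V k R) (f : (V → Fin k) → R) : Prop :=
  ∀ I : V → Fin k, ∃ t : ℕ, B.label ((B.step I)^[t] B.start) = .inr (f I)

end DBP

/-- A nondeterministic `k`-way branching program: as in `DBP`, but a non-final state
may have any number of outedges with any labels in `Fin k`, given by the edge
relation `edge q a q'`. -/
structure NBP (V : Type) (k : ℕ) (R : Type) where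
  Q : Type
  fin : Fintype Q
  start : Q
  label : Q → V ⊕ R
  edge : Q → Fin k → Q → Prop

namespace NBP

variable {V : Type} {k : ℕ} {R : Type}

/-- The size of a branching program is its number of states. -/
def size (B : NBP V k R) : ℕ := @Fintype.card B.Q B.fin

/-- One nondeterministic step on input `I`: follow an edge out of a non-final state
whose label matches the value of the queried variable. -/
def Step (B : NBP V k R) (I : V → Fin k) (q q' : B.Q) : Prop :=
  ∃ v, B.label q = .inl v ∧ B.edge q (I v) q'

/-- Some computation of `B` on input `I` ends in a final state labelled `r`. -/
def Outputs (B : NBP V k R) (I : V → Fin k) (r : R) : Prop :=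
  ∃ q, Relation.ReflTransGen (B.Step I) B.start q ∧ B.label q = .inr r

/-- `B` computes the total function `f`: on every input some computation ends in a
final state, and every computation ending in a final state ends in the one labelled
with the correct output. -/
def Computes (B : NBP V k R) (f : (V → Fin k) → R) : Prop :=
  ∀ (I : V → Fin k) (r : R), B.Outputs I r ↔ r = f I

end NBP

/-- A deterministic branching program for a tree evaluation problem is thrifty if on
every input, every query made during the computation is a thrifty query. -/
def DBPThrifty {R : Type} (d k h : ℕ) (hk : 0 < k) (B : DBP (TEVar d k h) k R) : Prop :=
  ∀ (I : TEVar d k h → Fin k) (t : ℕ) (v : TEVar d k h),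
    B.label ((B.step I)^[t] B.start) = .inl v → ThriftyVar d k hk h I v

/-- A nondeterministic branching program for a tree evaluation problem is thrifty if
for every input, every computation ending in a final state makes only thrifty
queries. -/
def NBPThrifty {R : Type} (d k h : ℕ) (hk : 0 < k) (B : NBP (TEVar d k h) k R) : Prop :=
  ∀ (I : TEVar d k h → Fin k) (n : ℕ) (path : ℕ → B.Q),
    path 0 = B.start →
    (∀ t < n, B.Step I (path t) (path (t + 1))) →
    (∃ r, B.label (path n) = .inr r) →
    ∀ t < n, ∀ v, B.label (path t) = .inl v → ThriftyVar d k hk h I v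

open Classical

noncomputable section BT23

namespace BT23

variable {k : ℕ}

def blockVar (p : Fin 2 → Fin k) (j : Fin 2) : TEVar 2 k 3 := .child j (.root p)

lemma blockVar_inj {p p' : Fin 2 → Fin k} {j j' : Fin 2}
    (h : blockVar p j = blockVar p' j') : p = p' ∧ j = j' := by
  unfold blockVar at h
  injection h with h1 h2 h3
  injection h3 with h4 h5
  exact ⟨h5, h2⟩

def mkInput (hk : 2 ≤ k) (p : Fin 2 → Fin k) (g : (Fin 2 → Fin k) → Bool)
    (w : Fin 2 → Fin k) : TEVar 2 k 3 → Fin k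
  | .root a => if g a then ⟨0, Nat.lt_of_lt_of_le (Nat.zero_lt_succ 1) hk⟩ else ⟨1, by omega⟩
  | .child j (.root q) => if q = p then w j else ⟨0, Nat.lt_of_lt_of_le (Nat.zero_lt_succ 1) hk⟩
  | .child _ (.child j' .leaf) => p j'

lemma mkInput_blockVar (hk : 2 ≤ k) (p : Fin 2 → Fin k) (g) (w) (j) :
    mkInput hk p g w (blockVar p j) = w j := by
  simp [mkInput, blockVar]

lemma mkInput_not_block (hk : 2 ≤ k) (p : Fin 2 → Fin k) (g) (w w') (v : TEVar 2 k 3)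
    (hv : ∀ j, v ≠ blockVar p j) : mkInput hk p g w v = mkInput hk p g w' v := by
  match v with
  | .root a => rfl
  | .child j (.root q) =>
    have : q ≠ p := by rintro rfl; exact hv j rfl
    simp [mkInput, this]
  | .child j (.child j' .leaf) => rfl

lemma rootValue_mkInput (hk : 2 ≤ k) (h0 : 0 < k) (p g w) :
    rootValue 2 k h0 3 (mkInput hk p g w) =
      if g w then ⟨0, h0⟩ else ⟨1, by omega⟩ := by
  simp only [rootValue, mkInput]
  congr 1

lemma BTfun_mkInput (hk : 2 ≤ k) (h0 : 0 < k) (p g w) :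
    BTfun 2 k h0 3 (mkInput hk p g w) = g w := by
  rw [BTfun, rootValue_mkInput hk h0]
  rcases Bool.eq_false_or_eq_true (g w) with h | h <;> simp [h, Fin.ext_iff]

section Machine

variable (hk : 2 ≤ k) (B : DBP (TEVar 2 k 3) k Bool) (p : Fin 2 → Fin k)

/-- Is `v` one of the two block variables of block `p`? -/
def isBlk (v : TEVar 2 k 3) : Prop := ∃ j, v = blockVar p j

/-- The walk stops at `q` if `q` is final or queries a block variable. -/
def stopped (q : B.Q) : Prop := ∀ v, B.label q = .inl v → isBlk p v

/-- The block states. -/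
def SB := {q : B.Q // ∃ j : Fin 2, B.label q = .inl (blockVar p j)}

variable (g : (Fin 2 → Fin k) → Bool)

/-- The outside walk: step using the fixed outside values, stopping at
block/final states. -/
def ostep (q : B.Q) : B.Q :=
  if stopped B p q then q else B.step (mkInput hk p g (fun _ => ⟨0, Nat.lt_of_lt_of_le (Nat.zero_lt_succ 1) hk⟩)) q

def classify (q : B.Q) : SB B p ⊕ Option Bool :=
  if h : ∃ j : Fin 2, B.label q = .inl (blockVar p j) then .inl ⟨q, h⟩
  else .inr (B.label q).getRight?

def tau (q : B.Q) : SB B p ⊕ Option Bool :=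
  if h : ∃ n, stopped B p ((ostep hk B p g)^[n] q) then
    classify B p ((ostep hk B p g)^[Nat.find h] q)
  else .inr none

def TT := (SB B p → Fin 2) × (Option (SB B p × Fin k) → (SB B p ⊕ Option Bool))

def mkData : TT B p :=
  ⟨fun q => q.2.choose,
   fun o => match o with
     | none => tau hk B p g B.start
     | some (q, a) => tau hk B p g (B.next q.1 a)⟩

def rstep (D : TT B p) (w : Fin 2 → Fin k) : (SB B p ⊕ Option Bool) → (SB B p ⊕ Option Bool)
  | .inl q => D.2 (some (q, w (D.1 q)))
  | .inr o => .inr o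

lemma step_inl {I : TEVar 2 k 3 → Fin k} {q : B.Q} {v} (h : B.label q = .inl v) :
    B.step I q = B.next q (I v) := by
  unfold DBP.step; rw [h]

lemma step_inr {I : TEVar 2 k 3 → Fin k} {q : B.Q} {r} (h : B.label q = .inr r) :
    B.step I q = q := by
  unfold DBP.step; rw [h]

lemma step_inr_iter {I : TEVar 2 k 3 → Fin k} {q : B.Q} {r} (h : B.label q = .inr r) (m : ℕ) :
    (B.step I)^[m] q = q := by
  induction m with
  | zero => rfl
  | succ m ih => rw [Function.iterate_succ_apply, step_inr B h, ih]

lemma rstep_absorb (D : TT B p) (w) (o : Option Bool) (N : ℕ) :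
    (rstep B p D w)^[N] (.inr o) = .inr o := by
  induction N with
  | zero => rfl
  | succ N ih => rw [Function.iterate_succ_apply, rstep, ih]

lemma rstep_det {D : TT B p} {w} {x} {o o' : Option Bool} {N M : ℕ}
    (hN : (rstep B p D w)^[N] x = .inr o) (hM : (rstep B p D w)^[M] x = .inr o') :
    o = o' := by
  rcases le_total N M with h | h
  · have := Function.iterate_add_apply (rstep B p D w) (M - N) N x
    rw [Nat.sub_add_cancel h] at this
    rw [this, hN, rstep_absorb] at hM
    injection hM
  · have := Function.iterate_add_apply (rstep B p D w) (N - M) M x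
    rw [Nat.sub_add_cancel h] at this
    rw [this, hM, rstep_absorb] at hN
    injection hN with h'
    exact h'.symm

lemma agree (w : Fin 2 → Fin k) (q : B.Q) (i : ℕ)
    (h : ∀ j < i, ¬ stopped B p ((ostep hk B p g)^[j] q)) :
    (B.step (mkInput hk p g w))^[i] q = (ostep hk B p g)^[i] q := by
  induction i with
  | zero => rfl
  | succ i ih =>
    rw [Function.iterate_succ_apply', Function.iterate_succ_apply',
      ih (fun j hj => h j (by omega))]
    set z := (ostep hk B p g)^[i] q with hz
    have hns : ¬ stopped B p z := h i (by omega)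
    have : ∃ v, B.label z = .inl v ∧ ¬ isBlk p v := by
      unfold stopped at hns; push_neg at hns
      obtain ⟨v, hv1, hv2⟩ := hns; exact ⟨v, hv1, hv2⟩
    obtain ⟨v, hv, hnb⟩ := this
    rw [ostep, if_neg hns, step_inl B hv, step_inl B hv,
      mkInput_not_block hk p g w _ v (by intro j hj; exact hnb ⟨j, hj⟩)]

end Machine

section Sim

variable {k : ℕ} (hk : 2 ≤ k) (B : DBP (TEVar 2 k 3) k Bool) (p : Fin 2 → Fin k)
  (g : (Fin 2 → Fin k) → Bool)

lemma sim (w : Fin 2 → Fin k) : ∀ (n : ℕ) (q : B.Q) (r : Bool),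
    B.label ((B.step (mkInput hk p g w))^[n] q) = .inr r →
    ∃ N, (rstep B p (mkData hk B p g) w)^[N] (tau hk B p g q) = .inr (some r) := by
  intro n
  induction n using Nat.strong_induction_on with
  | _ n IH =>
  intro q r hfin
  have stopped_of_label : ∀ (q' : B.Q) (r' : Bool), B.label q' = .inr r' → stopped B p q' := by
    intro q' r' h v hv
    rw [h] at hv; cases hv
  have hex : ∃ m, stopped B p ((ostep hk B p g)^[m] q) := by
    by_contra hno
    push_neg at hno
    have hag := agree hk B p g w q n (fun j _ => hno j)
    rw [hag] at hfin
    exact hno n (stopped_of_label _ _ hfin)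
  set m₀ := Nat.find hex with hm₀
  have hstop : stopped B p ((ostep hk B p g)^[m₀] q) := Nat.find_spec hex
  have hmin : ∀ j < m₀, ¬ stopped B p ((ostep hk B p g)^[j] q) :=
    fun j hj => Nat.find_min hex hj
  have hm₀n : m₀ ≤ n := by
    by_contra hlt
    push_neg at hlt
    have hag := agree hk B p g w q n (fun j hj => hmin j (by omega))
    rw [hag] at hfin
    exact hmin n hlt (stopped_of_label _ _ hfin)
  have hagree : (B.step (mkInput hk p g w))^[m₀] q = (ostep hk B p g)^[m₀] q :=
    agree hk B p g w q m₀ hmin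
  set z := (ostep hk B p g)^[m₀] q with hzdef
  have htau : tau hk B p g q = classify B p z := by
    rw [tau, dif_pos hex]
  have hiter : (B.step (mkInput hk p g w))^[n] q
      = (B.step (mkInput hk p g w))^[n - m₀] z := by
    conv_lhs => rw [show n = (n - m₀) + m₀ by omega]
    rw [Function.iterate_add_apply, hagree]
  by_cases hblk : ∃ j : Fin 2, B.label z = .inl (blockVar p j)
  · -- z is a block state
    obtain ⟨j, hj⟩ := hblk
    have hne : m₀ ≠ n := by
      rintro rfl
      rw [hiter, Nat.sub_self, Function.iterate_zero_apply, hj] at hfin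
      cases hfin
    have hlt : m₀ < n := lt_of_le_of_ne hm₀n hne
    set q' := B.next z (w j) with hq'
    have hstep : B.step (mkInput hk p g w) z = q' := by
      rw [step_inl B hj, mkInput_blockVar]
    have hfin' : B.label ((B.step (mkInput hk p g w))^[n - m₀ - 1] q') = .inr r := by
      have heq : (B.step (mkInput hk p g w))^[n - m₀] z
          = (B.step (mkInput hk p g w))^[n - m₀ - 1] q' := by
        conv_lhs => rw [show n - m₀ = (n - m₀ - 1) + 1 by omega]
        rw [Function.iterate_succ_apply, hstep]
      rw [hiter, heq] at hfin
      exact hfin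
    obtain ⟨N, hN⟩ := IH (n - m₀ - 1) (by omega) q' r hfin'
    refine ⟨N + 1, ?_⟩
    rw [Function.iterate_succ_apply]
    have hcz : classify B p z = .inl ⟨z, ⟨j, hj⟩⟩ := by
      rw [classify, dif_pos ⟨j, hj⟩]
    rw [htau, hcz]
    have hj0 : (⟨z, ⟨j, hj⟩⟩ : SB B p).2.choose = j := by
      have hspec := (⟨z, ⟨j, hj⟩⟩ : SB B p).2.choose_spec
      have h2 := hspec.symm.trans hj
      injection h2 with h2'
      exact (blockVar_inj h2').2
    show (rstep B p (mkData hk B p g) w)^[N]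
      ((mkData hk B p g).2 (some (⟨z, ⟨j, hj⟩⟩, w ((mkData hk B p g).1 ⟨z, ⟨j, hj⟩⟩)))) = _
    have : (mkData hk B p g).1 (⟨z, ⟨j, hj⟩⟩ : SB B p) = j := hj0
    rw [this]
    show (rstep B p (mkData hk B p g) w)^[N] (tau hk B p g (B.next z (w j))) = _
    exact hN
  · -- z is a final state
    have hzr : ∃ b, B.label z = .inr b := by
      rcases hlab : B.label z with v | b
      · exact absurd (hstop v hlab) (fun ⟨j, hj⟩ => hblk ⟨j, by rw [hlab, hj]⟩)
      · exact ⟨b, rfl⟩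
    obtain ⟨b, hb⟩ := hzr
    have : (B.step (mkInput hk p g w))^[n - m₀] z = z := step_inr_iter B hb _
    rw [hiter, this, hb] at hfin
    injection hfin with hbr
    refine ⟨0, ?_⟩
    rw [Function.iterate_zero_apply, htau, classify, dif_neg hblk, hb, hbr]
    rfl

end Sim

section Count

variable {k : ℕ} (hk : 2 ≤ k) (B : DBP (TEVar 2 k 3) k Bool) (p : Fin 2 → Fin k)

lemma mkData_inj (hB : B.Computes (BTfun 2 k (Nat.lt_of_lt_of_le (Nat.zero_lt_succ 1) hk) 3)) {g g' : (Fin 2 → Fin k) → Bool}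
    (h : mkData hk B p g = mkData hk B p g') : g = g' := by
  funext w
  obtain ⟨t1, h1⟩ := hB (mkInput hk p g w)
  rw [BTfun_mkInput] at h1
  obtain ⟨N, hN⟩ := sim hk B p g w t1 B.start (g w) h1
  obtain ⟨t2, h2⟩ := hB (mkInput hk p g' w)
  rw [BTfun_mkInput] at h2
  obtain ⟨M, hM⟩ := sim hk B p g' w t2 B.start (g' w) h2
  have e1 : tau hk B p g B.start = (mkData hk B p g).2 none := rfl
  have e2 : tau hk B p g' B.start = (mkData hk B p g').2 none := rfl
  rw [e1, h] at hN
  rw [e2] at hM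
  have := rstep_det B p hN hM
  injection this

noncomputable instance instFinSB : Fintype (SB B p) :=
  @Subtype.fintype _ _ (Classical.decPred _) B.fin

noncomputable instance instDecSB : DecidableEq (SB B p) := Classical.decEq _

noncomputable instance instFinTT : Fintype (TT B p) := by
  unfold TT; infer_instance

lemma card_TT : Fintype.card (TT B p)
    = 2 ^ (Fintype.card (SB B p)) *
      (Fintype.card (SB B p) + 3) ^ (Fintype.card (SB B p) * k + 1) := by
  show Fintype.card ((SB B p → Fin 2) × _) = _
  rw [Fintype.card_prod, Fintype.card_fun, Fintype.card_fun, Fintype.card_option,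
    Fintype.card_prod, Fintype.card_sum, Fintype.card_option, Fintype.card_fin,
    Fintype.card_fin, Fintype.card_bool]

lemma card_bound (hB : B.Computes (BTfun 2 k (Nat.lt_of_lt_of_le (Nat.zero_lt_succ 1) hk) 3)) :
    2 ^ (k ^ 2) ≤ 2 ^ (Fintype.card (SB B p)) *
      (Fintype.card (SB B p) + 3) ^ (Fintype.card (SB B p) * k + 1) := by
  have h1 : Fintype.card ((Fin 2 → Fin k) → Bool) = 2 ^ (k ^ 2) := by
    rw [Fintype.card_fun, Fintype.card_fun, Fintype.card_bool, Fintype.card_fin,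
      Fintype.card_fin]
  rw [← card_TT B p, ← h1]
  exact Fintype.card_le_of_injective _ (fun g g' h => mkData_inj hk B p hB h)

lemma sum_blocks : ∑ p : Fin 2 → Fin k, Fintype.card (SB B p) ≤ B.size := by
  classical
  letI := B.fin
  have hcard : ∀ p : Fin 2 → Fin k, Fintype.card (SB B p)
      = (Finset.univ.filter
          (fun q : B.Q => ∃ j : Fin 2, B.label q = .inl (blockVar p j))).card := by
    intro p
    rw [show (instFinSB B p) = (Subtype.fintype _) from Subsingleton.elim _ _]
    exact Fintype.card_subtype _
  calc ∑ p : Fin 2 → Fin k, Fintype.card (SB B p)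
      = ∑ p : Fin 2 → Fin k, (Finset.univ.filter
          (fun q : B.Q => ∃ j : Fin 2, B.label q = .inl (blockVar p j))).card := by
        exact Finset.sum_congr rfl (fun p _ => hcard p)
    _ = (Finset.univ.biUnion (fun p : Fin 2 → Fin k => Finset.univ.filter
          (fun q : B.Q => ∃ j : Fin 2, B.label q = .inl (blockVar p j)))).card := by
        rw [Finset.card_biUnion]
        intro p _ p' _ hpp'
        rw [Function.onFun, Finset.disjoint_left]
        rintro q hq hq'
        simp only [Finset.mem_filter] at hq hq'
        obtain ⟨-, j, hj⟩ := hq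
        obtain ⟨-, j', hj'⟩ := hq'
        rw [hj] at hj'
        injection hj' with e
        exact hpp' (blockVar_inj e).1
    _ ≤ Fintype.card B.Q := Finset.card_le_univ _
    _ = B.size := rfl

end Count

section Numeric

lemma numeric {k t : ℕ} (hk16 : 16 ≤ k)
    (hcard : 2 ^ (k ^ 2) ≤ 2 ^ t * (t + 3) ^ (t * k + 1)) :
    (k : ℝ) / Real.logb 2 k ≤ t := by
  set L := Real.logb 2 (k : ℝ) with hLdef
  have hk0 : (0 : ℝ) < k := by
    have : (0:ℕ) < k := by omega
    exact_mod_cast this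
  have hk16' : (16 : ℝ) ≤ k := by exact_mod_cast hk16
  have hL4 : (4 : ℝ) ≤ L := by
    rw [hLdef, Real.le_logb_iff_rpow_le one_lt_two hk0,
      show (4:ℝ) = ((4:ℕ):ℝ) by norm_num, Real.rpow_natCast]
    norm_num
    linarith
  have hL0 : (0 : ℝ) < L := by linarith
  have hLk : L ≤ k := by
    rw [hLdef, Real.logb_le_iff_le_rpow one_lt_two hk0, Real.rpow_natCast]
    have : k < 2 ^ k := Nat.lt_two_pow_self (n := k)
    exact_mod_cast this.le
  by_contra hcon
  push_neg at hcon
  have hp : (t : ℝ) < k / L := lt_of_lt_of_le hcon (le_of_eq rfl)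
  have htL : (t : ℝ) * L < k := (lt_div_iff₀ hL0).mp hp
  -- take logs of the cardinality bound
  have hR : (2:ℝ) ^ (k ^ 2) ≤ 2 ^ t * ((t:ℝ) + 3) ^ (t * k + 1) := by
    have := hcard
    push_cast
    exact_mod_cast this
  have hlogR : (k:ℝ) ^ 2 ≤ t + ((t:ℝ) * k + 1) * Real.logb 2 ((t:ℝ) + 3) := by
    have hpos1 : (0:ℝ) < 2 ^ (k ^ 2) := by positivity
    have h1 := Real.logb_le_logb_of_le (one_lt_two) hpos1 hR
    rw [Real.logb_mul (by positivity) (by positivity), Real.logb_pow, Real.logb_pow, Real.logb_pow,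
      Real.logb_self_eq_one one_lt_two] at h1
    push_cast at h1
    linarith
  rcases Nat.eq_zero_or_pos t with rfl | ht
  · have h3 : Real.logb 2 ((0:ℕ) + (3:ℝ)) ≤ 2 := by
      rw [Real.logb_le_iff_le_rpow one_lt_two (by norm_num),
        show (2:ℝ) = ((2:ℕ):ℝ) by norm_num, Real.rpow_natCast]
      norm_num
    push_cast at hlogR h3
    nlinarith
  · have ht1 : (1 : ℝ) ≤ t := by exact_mod_cast ht
    have hlog3 : Real.logb 2 ((t:ℝ) + 3) ≤ L - 1 := by
      have h34 : (t:ℝ) + 3 ≤ k / 2 := by nlinarith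
      have := Real.logb_le_logb_of_le one_lt_two (by positivity) h34
      rw [Real.logb_div (ne_of_gt hk0) (by norm_num),
        Real.logb_self_eq_one one_lt_two] at this
      linarith
    have hmul : ((t:ℝ) * k + 1) * Real.logb 2 ((t:ℝ) + 3) ≤ ((t:ℝ) * k + 1) * (L - 1) :=
      mul_le_mul_of_nonneg_left hlog3 (by positivity)
    have hfin : (k:ℝ) ^ 2 ≤ t + ((t:ℝ) * k + 1) * (L - 1) := le_trans hlogR (by linarith)
    have hkk : (t:ℝ) * L * k < k * k := by
      exact mul_lt_mul_of_pos_right htL hk0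
    nlinarith [mul_nonneg (sub_nonneg.mpr ht1) (sub_nonneg.mpr (le_trans (by norm_num : (1:ℝ) ≤ 16) hk16'))]

end Numeric

end BT23

end BT23

/-- For all sufficiently large `k`, every deterministic `k`-way branching program
solving `BT_2^3(k)` has at least `k^3 / log k` states. -/
theorem det_BT23_lower :
    ∃ K : ℕ, ∀ k : ℕ, K ≤ k → ∀ hk : 2 ≤ k,
      ∀ B : DBP (TEVar 2 k 3) k Bool,
        B.Computes (BTfun 2 k (by omega) 3) →
        (k : ℝ) ^ 3 / Real.logb 2 (k : ℝ) ≤ (B.size : ℝ) := by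
  refine ⟨16, ?_⟩
  intro k hK hk B hB
  by_contra hcon
  push_neg at hcon
  have hk0 : (0:ℝ) < k := by
    have : (0:ℕ) < k := by omega
    exact_mod_cast this
  have hL0 : 0 < Real.logb 2 (k:ℝ) := Real.logb_pos one_lt_two (by exact_mod_cast (by omega : 1 < k))
  have hnum : ∀ p : Fin 2 → Fin k,
      (k:ℝ) / Real.logb 2 (k:ℝ) ≤ (Fintype.card (BT23.SB B p) : ℝ) :=
    fun p => BT23.numeric (by omega) (BT23.card_bound hk B p hB)
  have hsum := BT23.sum_blocks B
  have hcardfun : (Finset.univ : Finset (Fin 2 → Fin k)).card = k ^ 2 := by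
    rw [Finset.card_univ, Fintype.card_fun, Fintype.card_fin, Fintype.card_fin]
  have hlow : ((k:ℝ) ^ 2) * ((k:ℝ) / Real.logb 2 (k:ℝ))
      ≤ ∑ p : Fin 2 → Fin k, (Fintype.card (BT23.SB B p) : ℝ) := by
    have h := Finset.card_nsmul_le_sum Finset.univ
      (fun p : Fin 2 → Fin k => (Fintype.card (BT23.SB B p) : ℝ))
      ((k:ℝ) / Real.logb 2 (k:ℝ)) (fun p _ => hnum p)
    rw [hcardfun] at h
    simpa [nsmul_eq_mul] using h
  have hcast : (∑ p : Fin 2 → Fin k, (Fintype.card (BT23.SB B p) : ℝ)) ≤ (B.size : ℝ) := by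
    have h := Nat.cast_le (α := ℝ).mpr hsum
    push_cast at h
    exact h
  have hring : (k:ℝ)^2 * ((k:ℝ)/Real.logb 2 (k:ℝ)) = (k:ℝ)^3 / Real.logb 2 (k:ℝ) := by
    ring
  linarith
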